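/- Fix N ≥ 1 and let λ ∈ SGN(N) be a signature, with λ⁺, λ⁻ the associated pair of Young diagrams and X(λ) the associated particles/holes configuration. Then the number of particles equals the number of holes: |X(λ) ∩ 𝔛^{(N)}_out| = |X(λ) ∩ 𝔛^{(N)}_in| = d(λ⁺) + d(λ⁻). In particular d(λ⁺) + d(λ⁻) ≤ N and |X(λ)| = 2(d(λ⁺) + d(λ⁻)) ≤ 2N; moreover X(λ) = ∅ if and only if λ is the zero signature (λ_1 = … = λ_N = 0). -/

import Mathlib

/-- A signature of length `N`: a nonincreasing `N`-tuple of integers. -/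
def Signature (N : ℕ) : Type := {l : Fin N → ℤ // Antitone l}

/-- The number of diagonal boxes `d(μ)` of a Young diagram `μ`. -/
def diagLen (μ : YoungDiagram) : ℕ := (μ.cells.filter fun c => c.1 = c.2).card

/-- The Young diagram `λ⁺` whose `i`-th row is `max(λ_i, 0)`. -/
def sigPosYD {N : ℕ} (l : Signature N) : YoungDiagram :=
  YoungDiagram.ofRowLens (List.ofFn fun i => (l.1 i).toNat)
    (List.sortedGE_ofFn_iff.mpr fun _ _ h => Int.toNat_le_toNat (l.2 h))

/-- The Young diagram `λ⁻` whose `j`-th row is `max(-λ_{N+1-j}, 0)`. -/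
def sigNegYD {N : ℕ} (l : Signature N) : YoungDiagram :=
  YoungDiagram.ofRowLens (List.ofFn fun i => (-(l.1 i.rev)).toNat)
    (List.sortedGE_ofFn_iff.mpr fun _ _ h =>
      Int.toNat_le_toNat (neg_le_neg (l.2 (Fin.rev_le_rev.mpr h))))

/-- The inner part `𝔛^{(N)}_in = 𝔛^{(N)} ∩ (-N/2, N/2) = {-(N-1)/2, …, (N-1)/2}`
(exactly `N` points); the particles of `X(λ)` lying in `𝔛^{(N)}_out` are exactly those
of `X(λ) ∖ 𝔛^{(N)}_in`. -/
def innerFin (N : ℕ) : Finset ℚ :=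
  Finset.univ.image fun k : Fin N => (k : ℚ) - (N - 1) / 2

/-- The `N`-point configuration `L(λ) = {λ_i - i + (N+1)/2 : 1 ≤ i ≤ N} ⊂ 𝔛^{(N)}`. -/
def config (N : ℕ) (l : Signature N) : Finset ℚ :=
  Finset.univ.image fun i : Fin N => (l.1 i : ℚ) - ((i : ℕ) + 1) + (N + 1) / 2

/-- The particles/holes configuration
`X(λ) = (L(λ) ∖ 𝔛^{(N)}_in) ∪ (𝔛^{(N)}_in ∖ L(λ))`. -/
def Xconf (N : ℕ) (l : Signature N) : Finset ℚ :=
  (config N l \ innerFin N) ∪ (innerFin N \ config N l)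

lemma diagLen_ofRowLens {N : ℕ} (v : Fin N → ℕ) (hv : (List.ofFn v).SortedGE) :
    diagLen (YoungDiagram.ofRowLens (List.ofFn v) hv)
      = (Finset.univ.filter fun i : Fin N => (i : ℕ) < v i).card := by
  classical
  unfold diagLen
  refine Finset.card_bij (fun c _ => ((c.1, c.1) : ℕ × ℕ)) ?_ ?_ ?_ |>.symm
  · intro i hi
    simp only [Finset.mem_filter, Finset.mem_univ, true_and] at hi
    simp only [Finset.mem_filter, YoungDiagram.mem_cells, YoungDiagram.mem_ofRowLens,
      List.length_ofFn, and_true]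
    exact ⟨i.2, by simpa using hi⟩
  · intro a _ b _ h
    simp only [Prod.mk.injEq] at h
    exact Fin.val_injective h.1
  · intro c hc
    simp only [Finset.mem_filter, YoungDiagram.mem_cells, YoungDiagram.mem_ofRowLens,
      List.length_ofFn] at hc
    obtain ⟨⟨h1, h2⟩, h3⟩ := hc
    refine ⟨⟨c.1, h1⟩, ?_, ?_⟩
    · simp only [Finset.mem_filter, Finset.mem_univ, true_and]
      simpa [h3] using h2
    · exact Prod.ext rfl h3

/-- For `λ ∈ SGN(N)`: the number of particles equals the number of holes,
`|X(λ) ∩ 𝔛^{(N)}_out| = |X(λ) ∩ 𝔛^{(N)}_in| = d(λ⁺) + d(λ⁻)`; in particular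
`d(λ⁺) + d(λ⁻) ≤ N` and `|X(λ)| = 2(d(λ⁺) + d(λ⁻)) ≤ 2N`; moreover `X(λ) = ∅` iff `λ`
is the zero signature. -/
theorem particles_holes_count (N : ℕ) (hN : 1 ≤ N) (l : Signature N) :
    (Xconf N l \ innerFin N).card = diagLen (sigPosYD l) + diagLen (sigNegYD l) ∧
    (Xconf N l ∩ innerFin N).card = diagLen (sigPosYD l) + diagLen (sigNegYD l) ∧
    diagLen (sigPosYD l) + diagLen (sigNegYD l) ≤ N ∧
    (Xconf N l).card = 2 * (diagLen (sigPosYD l) + diagLen (sigNegYD l)) ∧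
    (Xconf N l).card ≤ 2 * N ∧
    (Xconf N l = ∅ ↔ ∀ i, l.1 i = 0) := by
  classical
  set f : Fin N → ℚ := fun i => (l.1 i : ℚ) - ((i : ℕ) + 1) + (N + 1) / 2 with hfdef
  set A : Finset (Fin N) := Finset.univ.filter fun i : Fin N => (i : ℤ) + 1 ≤ l.1 i with hA
  set B : Finset (Fin N) := Finset.univ.filter fun i : Fin N => l.1 i ≤ (i : ℤ) - N with hB
  -- f is injective
  have hf : Function.Injective f := by
    have : StrictAnti f := by
      intro i j hij
      have h1 := l.2 hij.le
      have h2 : (i : ℚ) < (j : ℚ) := by exact_mod_cast hij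
      have h3 : (l.1 j : ℚ) ≤ (l.1 i : ℚ) := by exact_mod_cast h1
      simp only [hfdef]
      linarith
    exact this.injective
  -- membership of f i in innerFin
  have hmem : ∀ i : Fin N, f i ∈ innerFin N ↔ ((i : ℤ) + 1 - N ≤ l.1 i ∧ l.1 i ≤ (i : ℤ)) := by
    intro i
    unfold innerFin
    simp only [Finset.mem_image, Finset.mem_univ, true_and]
    constructor
    · rintro ⟨k, hk⟩
      have hk' : ((k : ℕ) : ℚ) = ((l.1 i + N - (i : ℤ) - 1 : ℤ) : ℚ) := by
        push_cast
        simp only [hfdef] at hk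
        linarith
      have hk2 : ((k : ℕ) : ℤ) = l.1 i + N - (i : ℤ) - 1 := by exact_mod_cast hk'
      have hkN : (k : ℕ) < N := k.2
      omega
    · rintro ⟨h1, h2⟩
      have hnn : (0 : ℤ) ≤ l.1 i + N - (i : ℤ) - 1 := by omega
      refine ⟨⟨(l.1 i + N - (i : ℤ) - 1).toNat, by omega⟩, ?_⟩
      have : (((l.1 i + N - (i : ℤ) - 1).toNat : ℤ) : ℚ) = ((l.1 i + N - (i : ℤ) - 1 : ℤ) : ℚ) := by
        rw [Int.toNat_of_nonneg hnn]
      push_cast at this ⊢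
      simp only [hfdef]
      linarith

  have hconf : config N l = Finset.univ.image f := rfl
  have hcardL : (config N l).card = N := by
    rw [hconf, Finset.card_image_of_injective _ hf, Finset.card_univ, Fintype.card_fin]
  have hcardI : (innerFin N).card = N := by
    unfold innerFin
    rw [Finset.card_image_of_injective, Finset.card_univ, Fintype.card_fin]
    intro a b hab
    have : (a : ℚ) = (b : ℚ) := by linarith [sub_left_injective.eq_iff.mp hab]
    have : (a : ℕ) = (b : ℕ) := by exact_mod_cast this
    exact Fin.val_injective this
  have hLI : (config N l \ innerFin N)
      = (Finset.univ.filter fun i => f i ∉ innerFin N).image f := by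
    ext x
    simp only [Finset.mem_sdiff, hconf, Finset.mem_image, Finset.mem_filter, Finset.mem_univ,
      true_and]
    constructor
    · rintro ⟨⟨i, rfl⟩, hx⟩; exact ⟨i, hx, rfl⟩
    · rintro ⟨i, hi, rfl⟩; exact ⟨⟨i, rfl⟩, hi⟩
  have hsplit : (Finset.univ.filter fun i : Fin N => f i ∉ innerFin N) = A ∪ B := by
    ext i
    simp only [Finset.mem_filter, Finset.mem_union, hA, hB, Finset.mem_univ, true_and, hmem i]
    omega
  have hABdisj : Disjoint A B := by
    rw [Finset.disjoint_left]
    intro i hiA hiB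
    simp only [hA, hB, Finset.mem_filter, Finset.mem_univ, true_and] at hiA hiB
    omega
  have hcardLI : (config N l \ innerFin N).card = A.card + B.card := by
    rw [hLI, Finset.card_image_of_injective _ hf, hsplit, Finset.card_union_of_disjoint hABdisj]
  have hcardIL : (innerFin N \ config N l).card = (config N l \ innerFin N).card := by
    have h1 := Finset.card_sdiff_add_card_inter (config N l) (innerFin N)
    have h2 := Finset.card_sdiff_add_card_inter (innerFin N) (config N l)
    rw [Finset.inter_comm] at h2
    omega
  have hXdiff : Xconf N l \ innerFin N = config N l \ innerFin N := by
    ext x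
    simp only [Xconf, Finset.mem_sdiff, Finset.mem_union]
    tauto
  have hXinter : Xconf N l ∩ innerFin N = innerFin N \ config N l := by
    ext x
    simp only [Xconf, Finset.mem_inter, Finset.mem_union, Finset.mem_sdiff]
    tauto
  have hXcard : (Xconf N l).card
      = (config N l \ innerFin N).card + (innerFin N \ config N l).card := by
    unfold Xconf
    exact Finset.card_union_of_disjoint disjoint_sdiff_sdiff
  have hdpos : diagLen (sigPosYD l) = A.card := by
    rw [sigPosYD, diagLen_ofRowLens]
    congr 1
    ext i
    simp only [Finset.mem_filter, Finset.mem_univ, true_and, hA]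
    omega
  have hdneg : diagLen (sigNegYD l) = B.card := by
    rw [sigNegYD, diagLen_ofRowLens]
    refine Finset.card_bij (fun i _ => i.rev) ?_ ?_ ?_
    · intro i hi
      simp only [Finset.mem_filter, Finset.mem_univ, true_and] at hi
      simp only [hB, Finset.mem_filter, Finset.mem_univ, true_and, Fin.val_rev]
      have h2 := i.2
      omega
    · intro a _ b _ h
      exact Fin.rev_injective h
    · intro j hj
      simp only [hB, Finset.mem_filter, Finset.mem_univ, true_and] at hj
      refine ⟨j.rev, ?_, Fin.rev_rev j⟩
      simp only [Finset.mem_filter, Finset.mem_univ, true_and, Fin.rev_rev, Fin.val_rev]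
      have h2 := j.2
      omega
  have hsum : A.card + B.card ≤ N := by
    calc A.card + B.card = (A ∪ B).card := (Finset.card_union_of_disjoint hABdisj).symm
    _ ≤ (Finset.univ : Finset (Fin N)).card := Finset.card_le_card (Finset.subset_univ _)
    _ = N := by simp
  refine ⟨by rw [hXdiff, hcardLI, hdpos, hdneg], by rw [hXinter, hcardIL, hcardLI, hdpos, hdneg],
    by rw [hdpos, hdneg]; exact hsum, by rw [hXcard, hcardIL, hcardLI, hdpos, hdneg]; ring, ?_, ?_⟩
  · rw [hXcard, hcardIL, hcardLI]
    omega
  · rw [← Finset.card_eq_zero, hXcard, hcardIL, hcardLI]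
    constructor
    · intro h
      have hAe : A.card = 0 := by omega
      have hBe : B.card = 0 := by omega
      rw [Finset.card_eq_zero, hA, Finset.filter_eq_empty_iff] at hAe
      rw [Finset.card_eq_zero, hB, Finset.filter_eq_empty_iff] at hBe
      intro i
      have t1 : ¬((⟨0, hN⟩ : Fin N) : ℤ) + 1 ≤ l.1 ⟨0, hN⟩ := hAe (Finset.mem_univ _)
      have t2 : ¬l.1 ⟨N - 1, by omega⟩ ≤ ((⟨N - 1, by omega⟩ : Fin N) : ℤ) - N :=
        hBe (Finset.mem_univ _)
      have t3 : l.1 i ≤ l.1 ⟨0, hN⟩ := l.2 (by simp [Fin.le_def])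
      have t4 : l.1 ⟨N - 1, by omega⟩ ≤ l.1 i := l.2 (by simp [Fin.le_def]; omega)
      simp only [Fin.val_mk] at t1 t2
      omega
    · intro h
      have hAe : A = ∅ := by
        rw [hA, Finset.filter_eq_empty_iff]
        intro i _
        rw [h i]
        have := i.2
        omega
      have hBe : B = ∅ := by
        rw [hB, Finset.filter_eq_empty_iff]
        intro i _
        rw [h i]
        have := i.2
        omega
      rw [hAe, hBe]
      simp
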